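/- Theorem 4(3), population form: for every index j < k (identified with the corresponding index of M), (M⁻¹)_{jj} ≤ ρ⁻¹·(M_RE⁻¹)_{jj}. Hence for homoscedastic residual variance σ², total sample size N and trial size n = ρN, the combined-data asymptotic variance σ²·N⁻¹·(M⁻¹)_{jj} of each working-model coefficient (in particular of the treatment coefficient, giving the ATE estimator τ̂) is at most the RE-only asymptotic variance σ²·n⁻¹·(M_RE⁻¹)_{jj} of τ̂_RE. -/

import Mathlib

open MeasureTheory ProbabilityTheory Matrix

section Aux

variable {Ω : Type*} [MeasurableSpace Ω] {μ : Measure Ω}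

private lemma memL2_mul_integrable {f g : Ω → ℝ} (hf : MemLp f 2 μ) (hg : MemLp g 2 μ) :
    Integrable (fun ω => f ω * g ω) μ := by
  have h : MemLp (f • g) 1 μ :=
    hg.smul hf
  have h2 := memLp_one_iff_integrable.mp h
  exact h2

/-- quadratic form of a Gram matrix is the integral of the squared linear combination -/
private lemma quad_integral {ι : Type*} [Fintype ι] (f : Ω → ι → ℝ)
    (hf : ∀ i, MemLp (fun ω => f ω i) 2 μ) (x : ι → ℝ) :
    x ⬝ᵥ ((Matrix.of fun i j => ∫ ω, f ω i * f ω j ∂μ) *ᵥ x)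
      = ∫ ω, (∑ i, x i * f ω i)^2 ∂μ := by
  have hint : ∀ i j : ι,
      Integrable (fun ω => (x i * f ω i) * (x j * f ω j)) μ := by
    intro i j
    exact memL2_mul_integrable ((hf i).const_mul (x i)) ((hf j).const_mul (x j))
  have hexp : ∀ ω, (∑ i, x i * f ω i)^2
      = ∑ i, ∑ j, (x i * f ω i) * (x j * f ω j) := by
    intro ω
    rw [sq, Finset.sum_mul_sum]
  calc x ⬝ᵥ ((Matrix.of fun i j => ∫ ω, f ω i * f ω j ∂μ) *ᵥ x)
      = ∑ i, ∑ j, ∫ ω, (x i * f ω i) * (x j * f ω j) ∂μ := by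
        simp only [dotProduct, mulVec, dotProduct, Matrix.of_apply, Finset.mul_sum]
        refine Finset.sum_congr rfl fun i _ => Finset.sum_congr rfl fun j _ => ?_
        rw [show (fun ω => (x i * f ω i) * (x j * f ω j))
            = fun ω => (x i * x j) * (f ω i * f ω j) by funext ω; ring,
          integral_const_mul]
        ring
    _ = ∑ i, ∫ ω, ∑ j, (x i * f ω i) * (x j * f ω j) ∂μ :=
        Finset.sum_congr rfl fun i _ =>
          (integral_finset_sum _ (fun j _ => hint i j)).symm
    _ = ∫ ω, ∑ i, ∑ j, (x i * f ω i) * (x j * f ω j) ∂μ :=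
        (integral_finset_sum _ (fun i _ =>
          integrable_finset_sum _ (fun j _ => hint i j))).symm
    _ = ∫ ω, (∑ i, x i * f ω i)^2 ∂μ := by
        simp_rw [hexp]

/-- completing the square: `2 u_j - ρ uᵀAu ≤ ρ⁻¹ (A⁻¹)_{jj}` for `A` pos. def. -/
private lemma complete_square {n : Type*} [Fintype n] [DecidableEq n]
    {A : Matrix n n ℝ} (hA : A.PosDef) {ρ : ℝ} (hρ : 0 < ρ) (u : n → ℝ) (j : n) :
    2 * u j - ρ * (u ⬝ᵥ A *ᵥ u) ≤ ρ⁻¹ * A⁻¹ j j := by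
  have hdet : IsUnit A.det := isUnit_iff_ne_zero.2 (ne_of_gt hA.det_pos)
  have hAsymm : Aᵀ = A := by
    have := hA.1
    rwa [Matrix.IsHermitian, conjTranspose_eq_transpose_of_trivial] at this
  set c : n → ℝ := A⁻¹ *ᵥ Pi.single j 1 with hc
  have hAc : A *ᵥ c = Pi.single j 1 := by
    rw [hc, Matrix.mulVec_mulVec, Matrix.mul_nonsing_inv _ hdet, Matrix.one_mulVec]
  have hcj : c j = A⁻¹ j j := by
    rw [hc, Matrix.mulVec_single]
    simp
  have h1 : u ⬝ᵥ A *ᵥ c = u j := by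
    rw [hAc, dotProduct_single, mul_one]
  have h2 : c ⬝ᵥ A *ᵥ u = u j := by
    rw [Matrix.dotProduct_mulVec, ← Matrix.mulVec_transpose, hAsymm, hAc,
      single_dotProduct, one_mul]
  have h3 : c ⬝ᵥ A *ᵥ c = A⁻¹ j j := by
    rw [hAc, dotProduct_single, mul_one, hcj]
  set w : n → ℝ := u - ρ⁻¹ • c with hw
  have hquad : 0 ≤ w ⬝ᵥ A *ᵥ w := hA.posSemidef.dotProduct_mulVec_nonneg w
  have hexp : w ⬝ᵥ A *ᵥ w
      = u ⬝ᵥ A *ᵥ u - ρ⁻¹ * u j - ρ⁻¹ * u j + ρ⁻¹ * ρ⁻¹ * A⁻¹ j j := by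
    simp only [hw, Matrix.mulVec_sub, Matrix.mulVec_smul, sub_dotProduct,
      dotProduct_sub, dotProduct_smul, smul_dotProduct, smul_eq_mul, h1, h2, h3]
    ring
  rw [hexp] at hquad
  have hρne : ρ ≠ 0 := ne_of_gt hρ
  have h5 : ρ * (u ⬝ᵥ A *ᵥ u - ρ⁻¹ * u j - ρ⁻¹ * u j + ρ⁻¹ * ρ⁻¹ * A⁻¹ j j)
      = ρ * (u ⬝ᵥ A *ᵥ u) - 2 * u j + ρ⁻¹ * A⁻¹ j j := by
    field_simp
    ring
  linarith [mul_nonneg (le_of_lt hρ) hquad, h5]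

end Aux

/-- Theorem 4(3), population form: with `M = E[p pᵀ]` the
combined-data Gram matrix of `p = (Uᵀ, Vᵀ)ᵀ` (working-model regressors `U` and
external-control bias basis `V`, the latter vanishing on the trial `S = 1`),
`M_RE = E[U Uᵀ | S = 1]` the trial Gram matrix, and `ρ = P(S=1)`, every
working-model coefficient satisfies `(M⁻¹)_{jj} ≤ ρ⁻¹ (M_RE⁻¹)_{jj}`; hence for
homoscedastic residual variance `σ²`, total sample size `N` and trial size
`n = ρN`, the combined-data asymptotic variance `σ² N⁻¹ (M⁻¹)_{jj}` is at most
the RE-only asymptotic variance `σ² (ρN)⁻¹ (M_RE⁻¹)_{jj}`. -/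
theorem combined_data_asymptotic_variance_dominated
    {Ω : Type*} [MeasurableSpace Ω] (P : Measure Ω) [IsProbabilityMeasure P]
    {k l : ℕ}
    (S : Ω → ℝ) (hS : Measurable S) (hS01 : ∀ ω, S ω = 0 ∨ S ω = 1)
    (ρ : ℝ) (hρ : ρ = (P {ω | S ω = 1}).toReal) (hρ0 : 0 < ρ) (hρ1 : ρ < 1)
    (U : Ω → Fin k → ℝ) (hU : Measurable U)
    (V : Ω → Fin l → ℝ) (hV : Measurable V)
    (hUL2 : ∀ i, MemLp (fun ω => U ω i) 2 P)
    (hVL2 : ∀ i, MemLp (fun ω => V ω i) 2 P)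
    -- the external-control bias basis vanishes on the trial
    (hVS : ∀ᵐ ω ∂P, S ω = 1 → V ω = 0)
    (M : Matrix (Fin k ⊕ Fin l) (Fin k ⊕ Fin l) ℝ)
    (hM : M = Matrix.of fun i j =>
      ∫ ω, Sum.elim (U ω) (V ω) i * Sum.elim (U ω) (V ω) j ∂P)
    (hMpd : M.PosDef)
    (MRE : Matrix (Fin k) (Fin k) ℝ)
    (hMRE : MRE = Matrix.of fun i j =>
      ∫ ω, U ω i * U ω j ∂(P[|{ω | S ω = 1}]))
    (hMREpd : MRE.PosDef) :
    ∀ j : Fin k,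
      M⁻¹ (Sum.inl j) (Sum.inl j) ≤ ρ⁻¹ * MRE⁻¹ j j ∧
      ∀ σ2 N : ℝ, 0 ≤ σ2 → 0 < N →
        σ2 / N * M⁻¹ (Sum.inl j) (Sum.inl j) ≤ σ2 / (ρ * N) * MRE⁻¹ j j := by
  intro j
  -- measurability of the trial set
  have hsmeas : MeasurableSet {ω | S ω = 1} := hS (measurableSet_singleton 1)
  have hPs_ne_zero : P {ω | S ω = 1} ≠ 0 := by
    intro h
    rw [hρ, h] at hρ0; simp at hρ0
  have hPs_ne_top : P {ω | S ω = 1} ≠ ⊤ := measure_ne_top _ _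
  -- the main inequality
  have key : M⁻¹ (Sum.inl j) (Sum.inl j) ≤ ρ⁻¹ * MRE⁻¹ j j := by
    have hdet : IsUnit M.det := isUnit_iff_ne_zero.2 (ne_of_gt hMpd.det_pos)
    set x : Fin k ⊕ Fin l → ℝ := fun i => M⁻¹ i (Sum.inl j) with hx
    set u : Fin k → ℝ := fun i => x (Sum.inl i) with hu
    -- M *ᵥ x is the standard basis vector
    have hMx : M *ᵥ x = Pi.single (Sum.inl j) 1 := by
      funext i
      have : (M * M⁻¹) i (Sum.inl j) = (1 : Matrix (Fin k ⊕ Fin l) (Fin k ⊕ Fin l) ℝ) i (Sum.inl j) := by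
        rw [Matrix.mul_nonsing_inv _ hdet]
      simpa [Matrix.mulVec, Matrix.mul_apply, dotProduct, Matrix.one_apply,
        Pi.single_apply, eq_comm] using this
    have hxMx : x ⬝ᵥ M *ᵥ x = M⁻¹ (Sum.inl j) (Sum.inl j) := by
      rw [hMx, dotProduct_single, mul_one]
    -- p is componentwise in L2
    have hpL2 : ∀ i : Fin k ⊕ Fin l, MemLp (fun ω => Sum.elim (U ω) (V ω) i) 2 P := by
      rintro (i | i)
      · exact hUL2 i
      · exact hVL2 i
    -- quadratic form as an integral
    have hquadM : x ⬝ᵥ M *ᵥ x = ∫ ω, (∑ i, x i * Sum.elim (U ω) (V ω) i)^2 ∂P := by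
      rw [hM]; exact quad_integral _ hpL2 x
    -- integrand memℒp / integrable
    have hsumL2 : MemLp (fun ω => ∑ i, x i * Sum.elim (U ω) (V ω) i) 2 P := by
      have : ∀ i ∈ Finset.univ, MemLp (fun ω => x i * Sum.elim (U ω) (V ω) i) 2 P :=
        fun i _ => (hpL2 i).const_mul (x i)
      simpa using memLp_finset_sum Finset.univ this
    have hsqInt : Integrable (fun ω => (∑ i, x i * Sum.elim (U ω) (V ω) i)^2) P := by
      have := memL2_mul_integrable hsumL2 hsumL2
      simpa [sq] using this
    -- restrict to the trial set
    have hge : ∫ ω in {ω | S ω = 1}, (∑ i, x i * Sum.elim (U ω) (V ω) i)^2 ∂P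
        ≤ ∫ ω, (∑ i, x i * Sum.elim (U ω) (V ω) i)^2 ∂P :=
      setIntegral_le_integral hsqInt (Filter.Eventually.of_forall fun ω => sq_nonneg _)
    -- on the trial set, only the U part remains
    have hV0 : ∀ᵐ ω ∂(P.restrict {ω | S ω = 1}), V ω = 0 := by
      rw [ae_restrict_iff' hsmeas]
      filter_upwards [hVS] with ω h hω using h hω
    have hcongr : ∫ ω in {ω | S ω = 1}, (∑ i, x i * Sum.elim (U ω) (V ω) i)^2 ∂P
        = ∫ ω in {ω | S ω = 1}, (∑ i, u i * U ω i)^2 ∂P := by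
      refine integral_congr_ae ?_
      filter_upwards [hV0] with ω h
      congr 1
      rw [Fintype.sum_sum_type]
      simp [h, hu]
    -- the trial Gram quadratic form
    have hUL2r : ∀ i, MemLp (fun ω => U ω i) 2 (P[|{ω | S ω = 1}]) := by
      intro i
      rw [ProbabilityTheory.cond]
      exact ((hUL2 i).restrict _).smul_measure
        (ENNReal.inv_ne_top.2 hPs_ne_zero)
    have hquadRE : u ⬝ᵥ MRE *ᵥ u = ∫ ω, (∑ i, u i * U ω i)^2 ∂(P[|{ω | S ω = 1}]) := by
      rw [hMRE]; exact quad_integral _ hUL2r u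
    have hcond : ∫ ω, (∑ i, u i * U ω i)^2 ∂(P[|{ω | S ω = 1}])
        = ρ⁻¹ * ∫ ω in {ω | S ω = 1}, (∑ i, u i * U ω i)^2 ∂P := by
      rw [ProbabilityTheory.cond, integral_smul_measure, ENNReal.toReal_inv, hρ,
        smul_eq_mul]
    have hrhoquad : ρ * (u ⬝ᵥ MRE *ᵥ u)
        = ∫ ω in {ω | S ω = 1}, (∑ i, u i * U ω i)^2 ∂P := by
      rw [hquadRE, hcond, ← mul_assoc, mul_inv_cancel₀ (ne_of_gt hρ0), one_mul]
    -- put it together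
    have hchain : ρ * (u ⬝ᵥ MRE *ᵥ u) ≤ x ⬝ᵥ M *ᵥ x := by
      rw [hrhoquad, hquadM, ← hcongr]; exact hge
    have hfinal : M⁻¹ (Sum.inl j) (Sum.inl j)
        ≤ 2 * u j - ρ * (u ⬝ᵥ MRE *ᵥ u) := by
      have hxj : x (Sum.inl j) = M⁻¹ (Sum.inl j) (Sum.inl j) := rfl
      have huj : u j = M⁻¹ (Sum.inl j) (Sum.inl j) := rfl
      rw [huj]
      have := hchain
      rw [hxMx] at this
      linarith
    exact hfinal.trans (complete_square hMREpd hρ0 u j)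
  refine ⟨key, fun σ2 N hσ2 hN => ?_⟩
  have h1 : σ2 / N * M⁻¹ (Sum.inl j) (Sum.inl j) ≤ σ2 / N * (ρ⁻¹ * MRE⁻¹ j j) :=
    mul_le_mul_of_nonneg_left key (div_nonneg hσ2 (le_of_lt hN))
  have h2 : σ2 / N * (ρ⁻¹ * MRE⁻¹ j j) = σ2 / (ρ * N) * MRE⁻¹ j j := by
    ring
  linarith
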